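/- Let l ≥ 1 be an integer and let H : ℝ³ → ℝ be twice continuously differentiable, harmonic (∑_{i=1}^{3} ∂²H/∂x_i² = 0 everywhere), and positively homogeneous of degree l (H(tx) = t^l·H(x) for all t > 0 and all x). Let ρ, W, V : ℝ → ℝ be differentiable on (0,∞). Define Y(x) = H(x)/‖x‖^l and the vector field v(x) = ( W(‖x‖)/‖x‖ )·Y(x)·( x/‖x‖ ) + V(‖x‖)·∇Y(x) on ℝ³ \ {0}. Then for every x ≠ 0, with r = ‖x‖, the divergence of the vector field ρ(‖·‖)·v at x equals (1/r²)·[ (d/dr)( r·ρ(r)·W(r) ) − l(l+1)·ρ(r)·V(r) ]·Y(x). In particular, ∇·(ρ v) vanishes identically on ℝ³ \ {0} whenever (d/dr)( r ρ W ) − l(l+1) ρ V = 0 on (0,∞). -/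

import Mathlib

open Set Filter InnerProductSpace
set_option maxHeartbeats 2000000

/-- The spherical harmonic `Y(x) = H(x)/‖x‖^l` built from a harmonic polynomial `H`
homogeneous of degree `l`. -/
noncomputable def sphHarm (l : ℕ) (H : EuclideanSpace ℝ (Fin 3) → ℝ)
    (x : EuclideanSpace ℝ (Fin 3)) : ℝ :=
  H x / ‖x‖ ^ l

/-- The polar-parity vector field
`v(x) = (W(‖x‖)/‖x‖)·Y(x)·(x/‖x‖) + V(‖x‖)·∇Y(x)`. -/
noncomputable def polarField (l : ℕ) (H : EuclideanSpace ℝ (Fin 3) → ℝ)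
    (W V : ℝ → ℝ) (x : EuclideanSpace ℝ (Fin 3)) : EuclideanSpace ℝ (Fin 3) :=
  ((W ‖x‖ / ‖x‖) * sphHarm l H x) • (‖x‖⁻¹ • x) + V ‖x‖ • gradient (sphHarm l H) x

lemma E3.sum_single (u : EuclideanSpace ℝ (Fin 3)) :
    ∑ i : Fin 3, u i • EuclideanSpace.single i (1:ℝ) = u := by
  ext j
  rw [show (∑ i : Fin 3, u i • EuclideanSpace.single i (1:ℝ)) j
      = ∑ i : Fin 3, (u i • EuclideanSpace.single i (1:ℝ)) j from
    by rw [WithLp.ofLp_sum, Finset.sum_apply]]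
  simp [EuclideanSpace.single_apply]

lemma E3.sum_clm (L : EuclideanSpace ℝ (Fin 3) →L[ℝ] ℝ) (u : EuclideanSpace ℝ (Fin 3)) :
    ∑ i : Fin 3, L (EuclideanSpace.single i 1) * u i = L u := by
  conv_rhs => rw [← E3.sum_single u]
  rw [map_sum]
  refine Finset.sum_congr rfl fun i _ => ?_
  rw [L.map_smul, smul_eq_mul, mul_comm]

lemma hasFDerivAt_norm3 {y : EuclideanSpace ℝ (Fin 3)} (hy : y ≠ 0) :
    HasFDerivAt (fun z : EuclideanSpace ℝ (Fin 3) => ‖z‖) (‖y‖⁻¹ • innerSL ℝ y) y := by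
  have hr : (0:ℝ) < ‖y‖ := norm_pos_iff.mpr hy
  have h1 : HasFDerivAt (fun z : EuclideanSpace ℝ (Fin 3) => ‖z‖^2)
      ((2:ℕ) • innerSL ℝ y) y := (hasStrictFDerivAt_norm_sq y).hasFDerivAt
  have h2 := h1.sqrt (by positivity)
  have hfun : (fun z : EuclideanSpace ℝ (Fin 3) => Real.sqrt (‖z‖^2)) = fun z => ‖z‖ := by
    funext z; rw [Real.sqrt_sq (norm_nonneg z)]
  rw [hfun] at h2
  refine h2.congr_fderiv ?_
  rw [Real.sqrt_sq (norm_nonneg y)]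
  ext z
  simp only [ContinuousLinearMap.coe_smul', Pi.smul_apply, smul_eq_mul]
  rw [nsmul_eq_mul]
  push_cast
  field_simp

lemma gradient_apply_E3 (f : EuclideanSpace ℝ (Fin 3) → ℝ) (y : EuclideanSpace ℝ (Fin 3))
    (i : Fin 3) : gradient f y i = fderiv ℝ f y (EuclideanSpace.single i 1) := by
  have h := InnerProductSpace.toDual_symm_apply (𝕜 := ℝ) (E := EuclideanSpace ℝ (Fin 3))
    (x := EuclideanSpace.single i 1) (y := fderiv ℝ f y)
  rw [show ((InnerProductSpace.toDual ℝ (EuclideanSpace ℝ (Fin 3))).symm (fderiv ℝ f y))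
      = gradient f y from rfl] at h
  rw [← h, EuclideanSpace.inner_single_right]
  simp

lemma euler_id (l : ℕ) (H : EuclideanSpace ℝ (Fin 3) → ℝ)
    (hH : Differentiable ℝ H)
    (hhom : ∀ t : ℝ, 0 < t → ∀ x : EuclideanSpace ℝ (Fin 3), H (t • x) = t ^ l * H x)
    (x : EuclideanSpace ℝ (Fin 3)) :
    fderiv ℝ H x x = (l : ℝ) * H x := by
  have hs : HasDerivAt (fun t : ℝ => t • x) ((1:ℝ) • x) 1 := (hasDerivAt_id 1).smul_const x
  have h1 : HasDerivAt (fun t : ℝ => H (t • x)) (fderiv ℝ H x x) 1 := by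
    have hH' : HasFDerivAt H (fderiv ℝ H x) ((1:ℝ) • x) := by
      rw [one_smul]; exact (hH x).hasFDerivAt
    simpa [Function.comp_def] using hH'.comp_hasDerivAt 1 hs
  have h3 : HasDerivAt (fun t : ℝ => t ^ l * H x) (((l:ℝ) * 1 ^ (l-1)) * H x) 1 :=
    (hasDerivAt_pow l 1).mul_const (H x)
  have h2 : HasDerivAt (fun t : ℝ => H (t • x)) ((l:ℝ) * H x) 1 := by
    have heq : (fun t : ℝ => H (t • x)) =ᶠ[nhds 1] fun t : ℝ => t ^ l * H x := by
      filter_upwards [Ioi_mem_nhds (zero_lt_one)] with t ht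
      exact hhom t ht x
    have := h3.congr_of_eventuallyEq heq
    simpa using this
  exact h1.unique h2

lemma grad_sphHarm (l : ℕ) (hl : 1 ≤ l) (H : EuclideanSpace ℝ (Fin 3) → ℝ)
    (hH : Differentiable ℝ H) {y : EuclideanSpace ℝ (Fin 3)} (hy : y ≠ 0) :
    HasGradientAt (sphHarm l H)
      ((‖y‖ ^ l)⁻¹ • gradient H y - ((l : ℝ) * H y / ‖y‖ ^ (l + 2)) • y) y := by
  obtain ⟨k, rfl⟩ : ∃ k, l = k + 1 := ⟨l - 1, (Nat.succ_pred_eq_of_pos hl).symm⟩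
  set l := k + 1 with hldef
  have hr : (0:ℝ) < ‖y‖ := norm_pos_iff.mpr hy
  have hN := hasFDerivAt_norm3 hy
  have hpow : HasDerivAt (fun r : ℝ => (r ^ l)⁻¹)
      (-((l:ℝ) * ‖y‖ ^ (l - 1)) / (‖y‖ ^ l) ^ 2) ‖y‖ :=
    (hasDerivAt_pow l ‖y‖).inv (pow_ne_zero _ hr.ne')
  have h2 : HasFDerivAt (fun z : EuclideanSpace ℝ (Fin 3) => (‖z‖ ^ l)⁻¹)
      ((-((l:ℝ) * ‖y‖ ^ (l - 1)) / (‖y‖ ^ l) ^ 2) • (‖y‖⁻¹ • innerSL ℝ y)) y := by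
    simpa [Function.comp_def] using hpow.comp_hasFDerivAt y hN
  have hmul := ((hH y).hasFDerivAt).mul h2
  have hfun : (fun z : EuclideanSpace ℝ (Fin 3) => H z * (‖z‖ ^ l)⁻¹) = sphHarm l H := by
    funext z; rw [sphHarm, div_eq_mul_inv]
  rw [show (H * fun z : EuclideanSpace ℝ (Fin 3) => (‖z‖ ^ l)⁻¹) = sphHarm l H from hfun] at hmul
  refine hasGradientAt_iff_hasFDerivAt.mpr ?_
  refine hmul.congr_fderiv ?_
  ext z
  rw [InnerProductSpace.toDual_apply_apply, inner_sub_left, real_inner_smul_left,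
    real_inner_smul_left]
  have h4 : (inner ℝ (gradient H y) z : ℝ) = fderiv ℝ H y z :=
    InnerProductSpace.toDual_symm_apply
  rw [h4]
  simp only [ContinuousLinearMap.add_apply, ContinuousLinearMap.coe_smul', Pi.smul_apply,
    smul_eq_mul, innerSL_apply_apply]
  field_simp
  simp only [hldef, Nat.add_sub_cancel]
  ring

theorem stmt_8 (l : ℕ) (hl : 1 ≤ l) (H : EuclideanSpace ℝ (Fin 3) → ℝ)
    (hH : ContDiff ℝ 2 H)
    (hharm : ∀ x : EuclideanSpace ℝ (Fin 3),
      ∑ i : Fin 3, fderiv ℝ (fun y => fderiv ℝ H y (EuclideanSpace.single i 1)) x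
        (EuclideanSpace.single i 1) = 0)
    (hhom : ∀ t : ℝ, 0 < t → ∀ x : EuclideanSpace ℝ (Fin 3), H (t • x) = t ^ l * H x)
    (ρ W V : ℝ → ℝ)
    (hρ : DifferentiableOn ℝ ρ (Ioi 0))
    (hW : DifferentiableOn ℝ W (Ioi 0))
    (hV : DifferentiableOn ℝ V (Ioi 0)) :
    (∀ x : EuclideanSpace ℝ (Fin 3), x ≠ 0 →
      ∑ i : Fin 3, fderiv ℝ (fun y => ρ ‖y‖ • polarField l H W V y) x
          (EuclideanSpace.single i 1) i
        = (1 / ‖x‖ ^ 2) *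
            (deriv (fun s => s * ρ s * W s) ‖x‖
              - (l:ℝ) * ((l:ℝ) + 1) * ρ ‖x‖ * V ‖x‖) * sphHarm l H x) ∧
    ((∀ r ∈ Ioi (0:ℝ), deriv (fun s => s * ρ s * W s) r
        - (l:ℝ) * ((l:ℝ) + 1) * ρ r * V r = 0) →
      ∀ x : EuclideanSpace ℝ (Fin 3), x ≠ 0 →
        ∑ i : Fin 3, fderiv ℝ (fun y => ρ ‖y‖ • polarField l H W V y) x
          (EuclideanSpace.single i 1) i = 0) := by
  have hHd : Differentiable ℝ H := hH.differentiable (by norm_num)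
  have key : ∀ x : EuclideanSpace ℝ (Fin 3), x ≠ 0 →
      ∑ i : Fin 3, fderiv ℝ (fun y => ρ ‖y‖ • polarField l H W V y) x
          (EuclideanSpace.single i 1) i
        = (1 / ‖x‖ ^ 2) *
            (deriv (fun s => s * ρ s * W s) ‖x‖
              - (l:ℝ) * ((l:ℝ) + 1) * ρ ‖x‖ * V ‖x‖) * sphHarm l H x := by
    intro x hx
    obtain ⟨k, hlk⟩ : ∃ k, l = k + 1 := ⟨l - 1, (Nat.succ_pred_eq_of_pos hl).symm⟩
    have hr : (0:ℝ) < ‖x‖ := norm_pos_iff.mpr hx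
    have hρd : HasDerivAt ρ (deriv ρ ‖x‖) ‖x‖ :=
      (hρ.differentiableAt (Ioi_mem_nhds hr)).hasDerivAt
    have hWd : HasDerivAt W (deriv W ‖x‖) ‖x‖ :=
      (hW.differentiableAt (Ioi_mem_nhds hr)).hasDerivAt
    have hVd : HasDerivAt V (deriv V ‖x‖) ‖x‖ :=
      (hV.differentiableAt (Ioi_mem_nhds hr)).hasDerivAt
    have ha' := ((hρd.mul hWd).sub ((hρd.const_mul ((l:ℕ):ℝ)).mul hVd)).div
      (hasDerivAt_pow (l+2) ‖x‖) (pow_ne_zero _ hr.ne')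
    have hb' := (hρd.mul hVd).div (hasDerivAt_pow l ‖x‖) (pow_ne_zero _ hr.ne')
    have hN := hasFDerivAt_norm3 hx
    have h1 : HasFDerivAt
        (fun y : EuclideanSpace ℝ (Fin 3) =>
          (ρ ‖y‖ * W ‖y‖ - (l:ℝ) * ρ ‖y‖ * V ‖y‖) / ‖y‖ ^ (l+2))
        (_ • (‖x‖⁻¹ • innerSL ℝ x)) x := ha'.comp_hasFDerivAt x hN
    have h2 : HasFDerivAt
        (fun y : EuclideanSpace ℝ (Fin 3) => ρ ‖y‖ * V ‖y‖ / ‖y‖ ^ l)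
        (_ • (‖x‖⁻¹ • innerSL ℝ x)) x := hb'.comp_hasFDerivAt x hN
    have hHx : HasFDerivAt H (fderiv ℝ H x) x := (hHd x).hasFDerivAt
    have hα := h1.mul hHx
    -- gradient H derivative
    have hC1 : ContDiff ℝ 1 (fderiv ℝ H) := hH.fderiv_right (by norm_num)
    have hfd2 : DifferentiableAt ℝ (fderiv ℝ H) x := (hC1.differentiable one_ne_zero) x
    have hD2 := hfd2.hasFDerivAt
    have hGi : ∀ i : Fin 3, HasFDerivAt
        (fun y : EuclideanSpace ℝ (Fin 3) =>
          fderiv ℝ H y (EuclideanSpace.single i 1) • EuclideanSpace.single i (1:ℝ))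
        ((fderiv ℝ H x (EuclideanSpace.single i 1)) •
            (0 : EuclideanSpace ℝ (Fin 3) →L[ℝ] EuclideanSpace ℝ (Fin 3))
          + (((fderiv ℝ H x).comp
                (0 : EuclideanSpace ℝ (Fin 3) →L[ℝ] EuclideanSpace ℝ (Fin 3))
              + (fderiv ℝ (fderiv ℝ H) x).flip (EuclideanSpace.single i 1)).smulRight
              (EuclideanSpace.single i (1:ℝ)))) x :=
      fun i => (hD2.clm_apply (hasFDerivAt_const (EuclideanSpace.single i 1) x)).smul
        (hasFDerivAt_const (EuclideanSpace.single i (1:ℝ)) x)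
    have hGsum := HasFDerivAt.sum (fun (i : Fin 3) (_ : i ∈ Finset.univ) => hGi i)
    have hfunG : (fun y : EuclideanSpace ℝ (Fin 3) => ∑ i : Fin 3,
        fderiv ℝ H y (EuclideanSpace.single i 1) • EuclideanSpace.single i (1:ℝ))
        = gradient H := by
      funext y
      conv_rhs => rw [← E3.sum_single (gradient H y)]
      exact Finset.sum_congr rfl fun i _ => by rw [gradient_apply_E3]
    rw [show (∑ i : Fin 3, fun y : EuclideanSpace ℝ (Fin 3) =>
        fderiv ℝ H y (EuclideanSpace.single i 1) • EuclideanSpace.single i (1:ℝ)) = gradient H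
        from by rw [← hfunG]; funext y; exact Finset.sum_apply y _ _] at hGsum
    have hF := (hα.smul (hasFDerivAt_id x)).add (h2.smul hGsum)
    -- the original function agrees with this one near x
    have hFeq : (fun y => ρ ‖y‖ • polarField l H W V y) =ᶠ[nhds x]
        (fun y : EuclideanSpace ℝ (Fin 3) =>
          ((ρ ‖y‖ * W ‖y‖ - (l:ℝ) * ρ ‖y‖ * V ‖y‖) / ‖y‖ ^ (l+2) * H y) • id y
            + (ρ ‖y‖ * V ‖y‖ / ‖y‖ ^ l) • gradient H y) := by
      filter_upwards [IsOpen.mem_nhds isOpen_compl_singleton hx] with y hy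
      have hy0 : y ≠ 0 := hy
      have hry : (0:ℝ) < ‖y‖ := norm_pos_iff.mpr hy0
      have hgy := (grad_sphHarm l hl H hHd hy0).gradient
      simp only [polarField, sphHarm, id_eq]
      rw [hgy]
      match_scalars
      · field_simp
        ring
      · field_simp
    rw [hFeq.fderiv_eq, (show HasFDerivAt (fun y : EuclideanSpace ℝ (Fin 3) =>
        ((ρ ‖y‖ * W ‖y‖ - (l:ℝ) * ρ ‖y‖ * V ‖y‖) / ‖y‖ ^ (l+2) * H y) • id y
          + (ρ ‖y‖ * V ‖y‖ / ‖y‖ ^ l) • gradient H y) _ x from hF).fderiv]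
    simp only [ContinuousLinearMap.add_apply, ContinuousLinearMap.coe_smul',
      Pi.smul_apply, ContinuousLinearMap.smulRight_apply, ContinuousLinearMap.coe_id',
      id_eq, ContinuousLinearMap.coe_sum', Finset.sum_apply,
      ContinuousLinearMap.comp_zero, ContinuousLinearMap.zero_apply, smul_zero,
      zero_add, add_zero, ContinuousLinearMap.flip_apply, PiLp.add_apply,
      PiLp.smul_apply, smul_eq_mul, ContinuousLinearMap.zero_comp]
    have hsum0 : ∀ i : Fin 3, (EuclideanSpace.single i (1:ℝ)) i = 1 := fun i => by
      simp [EuclideanSpace.single_apply]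
    have hsum4' : ∀ i : Fin 3, (∑ j : Fin 3,
        fderiv ℝ (fderiv ℝ H) x (EuclideanSpace.single i 1) (EuclideanSpace.single j 1)
          • EuclideanSpace.single j (1:ℝ)) i
        = fderiv ℝ (fderiv ℝ H) x (EuclideanSpace.single i 1) (EuclideanSpace.single i 1) := by
      intro i
      rw [show (∑ j : Fin 3,
          fderiv ℝ (fderiv ℝ H) x (EuclideanSpace.single i 1) (EuclideanSpace.single j 1)
            • EuclideanSpace.single j (1:ℝ)) i
          = ∑ j : Fin 3, (fderiv ℝ (fderiv ℝ H) x (EuclideanSpace.single i 1)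
              (EuclideanSpace.single j 1) • EuclideanSpace.single j (1:ℝ)) i from
        by rw [WithLp.ofLp_sum, Finset.sum_apply]]
      simp [EuclideanSpace.single_apply]
    have hsum1 : ∑ i : Fin 3, fderiv ℝ H x (EuclideanSpace.single i 1) * x i
        = (l:ℝ) * H x := by
      rw [E3.sum_clm]; exact euler_id l H hHd hhom x
    have hsum2 : ∑ i : Fin 3, (innerSL ℝ x) (EuclideanSpace.single i 1) * x i = ‖x‖^2 := by
      rw [E3.sum_clm, innerSL_apply_apply]
      exact real_inner_self_eq_norm_sq x
    have hsum3 : ∑ i : Fin 3, (innerSL ℝ x) (EuclideanSpace.single i 1) * gradient H x i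
        = (l:ℝ) * H x := by
      rw [E3.sum_clm, innerSL_apply_apply, real_inner_comm]
      exact (InnerProductSpace.toDual_symm_apply).trans (euler_id l H hHd hhom x)
    have hharm' : ∑ i : Fin 3, fderiv ℝ (fderiv ℝ H) x (EuclideanSpace.single i 1)
        (EuclideanSpace.single i 1) = 0 := by
      refine Eq.trans ?_ (hharm x)
      refine Finset.sum_congr rfl fun i _ => ?_
      rw [fderiv_clm_apply hfd2 (differentiableAt_const _)]
      simp
    simp only [hsum4', hsum0, mul_one]
    have hDval : deriv (fun s : ℝ => s * ρ s * W s) ‖x‖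
        = (1 * ρ ‖x‖ + ‖x‖ * deriv ρ ‖x‖) * W ‖x‖ + ‖x‖ * ρ ‖x‖ * deriv W ‖x‖ :=
      (((hasDerivAt_id ‖x‖).mul hρd).mul hWd).deriv
    set c1 := (ρ ‖x‖ * W ‖x‖ - (l:ℝ) * ρ ‖x‖ * V ‖x‖) / ‖x‖ ^ (l + 2) with hc1
    set c2 := ((deriv ρ ‖x‖ * W ‖x‖ + ρ ‖x‖ * deriv W ‖x‖
          - ((l:ℝ) * deriv ρ ‖x‖ * V ‖x‖ + (l:ℝ) * ρ ‖x‖ * deriv V ‖x‖)) * ‖x‖ ^ (l + 2)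
        - (ρ ‖x‖ * W ‖x‖ - (l:ℝ) * ρ ‖x‖ * V ‖x‖) * (((l + 2 : ℕ):ℝ) * ‖x‖ ^ (l + 2 - 1)))
        / (‖x‖ ^ (l + 2)) ^ 2 with hc2
    set c3 := ((deriv ρ ‖x‖ * V ‖x‖ + ρ ‖x‖ * deriv V ‖x‖) * ‖x‖ ^ l
        - ρ ‖x‖ * V ‖x‖ * ((l : ℝ) * ‖x‖ ^ (l - 1))) / (‖x‖ ^ l) ^ 2 with hc3
    set cb := ρ ‖x‖ * V ‖x‖ / ‖x‖ ^ l with hcb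
    trans (∑ i : Fin 3, (c1 * H x
      + (c1 * (fderiv ℝ H x (EuclideanSpace.single i 1) * x i)
        + H x * c2 * ‖x‖⁻¹ * ((innerSL ℝ x) (EuclideanSpace.single i 1) * x i))
      + (cb * fderiv ℝ (fderiv ℝ H) x (EuclideanSpace.single i 1) (EuclideanSpace.single i 1)
        + c3 * ‖x‖⁻¹ * ((innerSL ℝ x) (EuclideanSpace.single i 1) * gradient H x i))))
    · exact Finset.sum_congr rfl fun i _ => by
        simp only [Pi.mul_apply, Pi.sub_apply, hc1, hc2, hc3, hcb]; ring
    · simp only [Finset.sum_add_distrib, ← Finset.mul_sum, hsum1, hsum2, hsum3, hharm',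
        Finset.sum_const, Finset.card_univ, Fintype.card_fin, nsmul_eq_mul, mul_zero]
      rw [hDval, sphHarm, hc1, hc2, hc3]
      subst hlk
      simp only [show k+1+2-1 = k+2 from rfl, show k+1-1 = k from rfl,
        show k+1+2 = k+3 from rfl]
      push_cast
      field_simp
      ring
  refine ⟨key, fun hzero x hx => ?_⟩
  rw [key x hx, hzero ‖x‖ (mem_Ioi.mpr (norm_pos_iff.mpr hx))]
  ring
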